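/- If T is a tree with diameter d, then ⌈√(2(d+1)) − 1/2⌉ ≤ th₊(T) ≤ ⌈d/2⌉ + 1. -/

import Mathlib

open SimpleGraph


/-- Reachability in `G` avoiding the blue set `B` (i.e., within a white component). -/
def offReach {V : Type*} (G : SimpleGraph V) (B : Set V) : V → V → Prop :=
  Relation.ReflTransGen (fun a b => G.Adj a b ∧ a ∉ B ∧ b ∉ B)

/-- The positive semidefinite color change rule: a blue vertex `v` forces a white vertex `w`
if `w` is the unique white neighbor of `v` in the white component of `w` (together with `B`). -/
def psdForces {V : Type*} (G : SimpleGraph V) (B : Set V) (v w : V) : Prop :=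
  v ∈ B ∧ w ∉ B ∧ G.Adj v w ∧
    ∀ u, u ∉ B → G.Adj v u → offReach G B u w → u = w

/-- One round of PSD forcing: perform all possible forces. -/
def psdStep {V : Type*} (G : SimpleGraph V) (B : Set V) : Set V :=
  B ∪ {w | ∃ v, psdForces G B v w}

/-- `S` is a positive semidefinite zero forcing set. -/
def IsPSDForcingSet {V : Type*} (G : SimpleGraph V) (S : Set V) : Prop :=
  ∃ t, (psdStep G)^[t] S = Set.univ

/-- The PSD propagation time of `S`. -/
noncomputable def psdPt {V : Type*} (G : SimpleGraph V) (S : Set V) : ℕ :=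
  sInf {t | (psdStep G)^[t] S = Set.univ}

/-- The PSD throttling number of `G`. -/
noncomputable def psdTh {V : Type*} (G : SimpleGraph V) [Fintype V] : ℕ :=
  sInf {k | ∃ S : Finset V, IsPSDForcingSet G ↑S ∧ k = S.card + psdPt G ↑S}

section Helpers

variable {V : Type*} {T : SimpleGraph V}

/-- In a tree, every path realizes the distance. -/
lemma tree_path_length (hT : T.IsTree) {a b : V} {p : T.Walk a b} (hp : p.IsPath) :
    p.length = T.dist a b := by
  obtain ⟨q, hq, hlen⟩ := hT.isConnected.exists_path_of_dist a b
  have : (⟨p, hp⟩ : T.Path a b) = ⟨q, hq⟩ := hT.IsAcyclic.path_unique _ _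
  have hpq : p = q := congrArg Subtype.val this
  rw [hpq]; exact hlen

/-- In a tree, a vertex on a path splits the distance. -/
lemma tree_dist_split (hT : T.IsTree) {a b y : V} {p : T.Walk a b} (hp : p.IsPath)
    (hy : y ∈ p.support) : T.dist a b = T.dist a y + T.dist y b := by
  classical
  have hspec := p.take_spec hy
  have h1 : (p.takeUntil y hy).length = T.dist a y := tree_path_length hT (hp.takeUntil hy)
  have h2 : (p.dropUntil y hy).length = T.dist y b := tree_path_length hT (hp.dropUntil hy)
  have := tree_path_length hT hp
  rw [← this, ← hspec, SimpleGraph.Walk.length_append, h1, h2]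

/-- Junction lemma: if two paths only meet at their common endpoint, distances add. -/
lemma tree_dist_add (hT : T.IsTree) {a b c : V} {p : T.Walk a b} {q : T.Walk b c}
    (hp : p.IsPath) (hq : q.IsPath)
    (h : ∀ w, w ∈ p.support → w ∈ q.support → w = b) :
    T.dist a c = T.dist a b + T.dist b c := by
  have hb : b ∉ q.support.tail := by
    have := hq.support_nodup
    rw [q.support_eq_cons] at this
    exact (List.nodup_cons.mp this).1
  have happ : (p.append q).IsPath := by
    apply SimpleGraph.Walk.IsPath.mk'
    rw [SimpleGraph.Walk.support_append]
    refine List.Nodup.append hp.support_nodup ?_ ?_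
    · have := hq.support_nodup
      rw [q.support_eq_cons] at this
      exact (List.nodup_cons.mp this).2
    · intro w hwp hwq
      have : w ∈ q.support := by
        rw [q.support_eq_cons]; exact List.mem_cons_of_mem _ hwq
      exact hb ((h w hwp this) ▸ hwq)
  have := tree_path_length hT happ
  rw [SimpleGraph.Walk.length_append, tree_path_length hT hp, tree_path_length hT hq] at this
  exact this.symm

/-- Intermediate points on geodesics exist in connected graphs. -/
lemma exists_intermediate (hc : T.Connected) (u v : V) (h : ℕ) (hh : h ≤ T.dist u v) :
    ∃ c, T.dist u c = h ∧ T.dist c v = T.dist u v - h := by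
  induction h with
  | zero => exact ⟨u, by simp [SimpleGraph.dist_self]⟩
  | succ n ih =>
    obtain ⟨c, hc1, hc2⟩ := ih (Nat.le_of_succ_le hh)
    have hcv : T.dist c v ≠ 0 := by omega
    obtain ⟨p, hp, hlen⟩ := hc.exists_path_of_dist c v
    cases p with
    | nil => simp at hlen; omega
    | cons e p' =>
      rename_i c'
      refine ⟨c', ?_, ?_⟩
      · have htr1 : T.dist u c' ≤ T.dist u c + 1 := by
          have := hc.dist_triangle (u := u) (v := c) (w := c')
          have h1 : T.dist c c' ≤ 1 := SimpleGraph.dist_le e.toWalk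
          omega
        have hc'v : T.dist c' v ≤ T.dist u v - (n+1) := by
          have : T.dist c' v ≤ p'.length := SimpleGraph.dist_le p'
          simp [SimpleGraph.Walk.length_cons] at hlen
          omega
        have htr2 : T.dist u v ≤ T.dist u c' + T.dist c' v :=
          hc.dist_triangle
        omega
      · have h1 : T.dist c v ≤ 1 + T.dist c' v := by
          have := hc.dist_triangle (u := c) (v := c') (w := v)
          have h2 : T.dist c c' ≤ 1 := SimpleGraph.dist_le e.toWalk
          omega
        have h2 : T.dist c' v ≤ p'.length := SimpleGraph.dist_le p'
        simp [SimpleGraph.Walk.length_cons] at hlen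
        have htr2 : T.dist u v ≤ T.dist u c' + T.dist c' v := hc.dist_triangle
        have htr1 : T.dist u c' ≤ T.dist u c + 1 := by
          have := hc.dist_triangle (u := u) (v := c) (w := c')
          have h1 : T.dist c c' ≤ 1 := SimpleGraph.dist_le e.toWalk
          omega
        omega

end Helpers

section L
variable {V : Type*} {T : SimpleGraph V}

/-- In a tree, a vertex `c` on a geodesic from `u` to `v` lies on the geodesic from any `x`
to `u` or to `v`. -/
lemma tree_center_split (hT : T.IsTree) {u v c : V}
    (hc : T.dist u c + T.dist c v = T.dist u v) (x : V) :
    T.dist x u = T.dist x c + T.dist c u ∨ T.dist x v = T.dist x c + T.dist c v := by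
  classical
  obtain ⟨R, hR, hRl⟩ := hT.isConnected.exists_path_of_dist c u
  obtain ⟨S, hS, hSl⟩ := hT.isConnected.exists_path_of_dist c v
  obtain ⟨Q, hQ, hQl⟩ := hT.isConnected.exists_path_of_dist x c
  -- R and S only overlap at c
  have hRS : ∀ w, w ∈ R.support → w ∈ S.support → w = c := by
    intro w hwR hwS
    have e1 : T.dist c u = T.dist c w + T.dist w u := tree_dist_split hT hR hwR
    have e2 : T.dist c v = T.dist c w + T.dist w v := tree_dist_split hT hS hwS
    have tri : T.dist u v ≤ T.dist u w + T.dist w v := hT.isConnected.dist_triangle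
    have cuv : T.dist u c = T.dist c u := SimpleGraph.dist_comm ..
    have cw : T.dist u w = T.dist w u := SimpleGraph.dist_comm ..
    have hw0 : T.dist c w = 0 := by omega
    exact ((hT.isConnected.dist_eq_zero_iff).mp ((SimpleGraph.dist_comm ..).trans hw0)).symm.symm
  by_cases hQR : ∀ w, w ∈ Q.support → w ∈ R.support → w = c
  · left
    rw [tree_dist_add hT hQ hR hQR]
  by_cases hQS : ∀ w, w ∈ Q.support → w ∈ S.support → w = c
  · right
    rw [tree_dist_add hT hQ hS hQS]
  exfalso
  push_neg at hQR hQS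
  obtain ⟨y, hyQ, hyR, hyne⟩ := hQR
  obtain ⟨z, hzQ, hzS, hzne⟩ := hQS
  -- dist y z = dist y c + dist c z
  have hyz : T.dist y z = T.dist y c + T.dist c z := by
    have hpR : ((R.takeUntil y hyR).reverse).IsPath := (hR.takeUntil hyR).reverse
    have hpS : (S.takeUntil z hzS).IsPath := hS.takeUntil hzS
    have hsub : ∀ w, w ∈ ((R.takeUntil y hyR).reverse).support →
        w ∈ (S.takeUntil z hzS).support → w = c := by
      intro w hw1 hw2
      rw [SimpleGraph.Walk.support_reverse, List.mem_reverse] at hw1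
      exact hRS w (R.support_takeUntil_subset hyR hw1) (S.support_takeUntil_subset hzS hw2)
    have := tree_dist_add hT hpR hpS hsub
    have h1 : T.dist y c = T.dist y c := rfl
    -- tree_dist_add gives dist y z = dist y c + dist c z
    exact this
  -- y, z both on the geodesic Q from x to c
  have exy : T.dist x c = T.dist x y + T.dist y c := tree_dist_split hT hQ hyQ
  have exz : T.dist x c = T.dist x z + T.dist z c := tree_dist_split hT hQ hzQ
  have hcz0 : T.dist c z ≠ 0 := fun h0 =>
    hzne ((hT.isConnected.dist_eq_zero_iff).mp ((SimpleGraph.dist_comm ..).trans h0)).symm.symm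
  have hcy0 : T.dist c y ≠ 0 := fun h0 =>
    hyne ((hT.isConnected.dist_eq_zero_iff).mp ((SimpleGraph.dist_comm ..).trans h0)).symm.symm
  by_cases hzd : z ∈ (Q.dropUntil y hyQ).support
  · have hD : (Q.dropUntil y hyQ).IsPath := hQ.dropUntil hyQ
    have : T.dist y c = T.dist y z + T.dist z c := tree_dist_split hT hD hzd
    have c1 : T.dist z c = T.dist c z := SimpleGraph.dist_comm ..
    omega
  · have hzt : z ∈ (Q.takeUntil y hyQ).support := by
      have := Q.take_spec hyQ
      have hmem : z ∈ ((Q.takeUntil y hyQ).append (Q.dropUntil y hyQ)).support := by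
        rw [this]; exact hzQ
      rw [SimpleGraph.Walk.mem_support_append_iff] at hmem
      tauto
    have hTk : (Q.takeUntil y hyQ).IsPath := hQ.takeUntil hyQ
    have e3 : T.dist x y = T.dist x z + T.dist z y := tree_dist_split hT hTk hzt
    have c1 : T.dist z y = T.dist y z := SimpleGraph.dist_comm ..
    have c2 : T.dist z c = T.dist c z := SimpleGraph.dist_comm ..
    have c3 : T.dist y c = T.dist c y := SimpleGraph.dist_comm ..
    omega
end L

section Forcing
variable {V : Type*} {T : SimpleGraph V}

/-- From `offReach` extract a walk avoiding `B`. -/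
lemma offReach_walk {G : SimpleGraph V} {B : Set V} {u x : V}
    (h : Relation.ReflTransGen (fun a b => G.Adj a b ∧ a ∉ B ∧ b ∉ B) u x) (hu : u ∉ B) :
    ∃ p : G.Walk u x, ∀ y ∈ p.support, y ∉ B := by
  induction h with
  | refl => exact ⟨SimpleGraph.Walk.nil, by simp [hu]⟩
  | tail hab hbc ih =>
    obtain ⟨p, hp⟩ := ih
    refine ⟨p.concat hbc.1, ?_⟩
    intro y hy
    rw [SimpleGraph.Walk.support_concat, List.mem_append] at hy
    rcases hy with hy | hy
    · exact hp y hy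
    · simp at hy; subst hy; exact hbc.2.2

/-- Ball growth in a tree: starting from a single vertex, the blue set after `i` steps is
exactly the ball of radius `i`. -/
lemma tree_ball (hT : T.IsTree) (c : V) (i : ℕ) :
    (psdStep T)^[i] {c} = {x | T.dist c x ≤ i} := by
  classical
  induction i with
  | zero =>
    ext x
    simp only [Function.iterate_zero, id_eq, Set.mem_setOf_eq, Nat.le_zero,
      Set.mem_singleton_iff]
    rw [hT.isConnected.dist_eq_zero_iff]
    exact ⟨fun h => h.symm, fun h => h.symm⟩
  | succ n ih =>
    rw [Function.iterate_succ_apply', ih]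
    ext x
    simp only [Set.mem_setOf_eq]
    constructor
    · intro hx
      rcases hx with hx | ⟨v, hv⟩
      · simp only [Set.mem_setOf_eq] at hx; omega
      · obtain ⟨hvB, hwB, hadj, huniq⟩ := hv
        simp only [Set.mem_setOf_eq] at hvB
        have : T.dist c x ≤ T.dist c v + T.dist v x := hT.isConnected.dist_triangle
        have h1 : T.dist v x ≤ 1 := SimpleGraph.dist_le hadj.toWalk
        omega
    · intro hx
      by_cases hle : T.dist c x ≤ n
      · exact Or.inl hle
      · have hx1 : T.dist c x = n + 1 := by omega
        obtain ⟨v, hv1, hv2⟩ := exists_intermediate hT.isConnected c x n (by omega)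
        rw [hx1] at hv2
        simp only [Nat.add_sub_cancel_left] at hv2
        have hadj : T.Adj v x := SimpleGraph.dist_eq_one_iff_adj.mp hv2
        refine Or.inr ⟨v, ?_, ?_, hadj, ?_⟩
        · simp only [Set.mem_setOf_eq]; omega
        · simp only [Set.mem_setOf_eq]; omega
        · intro u hu hadj2 hreach
          by_contra hne
          obtain ⟨p, hp⟩ := offReach_walk hreach hu
          have hbp : p.bypass.IsPath := SimpleGraph.Walk.bypass_isPath p
          have hq : (SimpleGraph.Walk.cons hadj2.symm (SimpleGraph.Walk.cons hadj
              SimpleGraph.Walk.nil)).IsPath := by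
            apply SimpleGraph.Walk.IsPath.mk'
            simp [SimpleGraph.Walk.support_cons, SimpleGraph.Walk.support_nil,
              hadj2.ne', hadj.ne, hne]
          have heq : (⟨p.bypass, hbp⟩ : T.Path u x) = ⟨_, hq⟩ := hT.IsAcyclic.path_unique _ _
          have hvmem : v ∈ p.bypass.support := by
            have : p.bypass = SimpleGraph.Walk.cons hadj2.symm
                (SimpleGraph.Walk.cons hadj SimpleGraph.Walk.nil) := congrArg Subtype.val heq
            rw [this]
            simp
          have := hp v (SimpleGraph.Walk.support_bypass_subset p hvmem)
          simp only [Set.mem_setOf_eq] at this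
          omega

/-- Any vertex blue after `n` rounds is within distance `n` of the initial set. -/
lemma spread {G : SimpleGraph V} (hc : G.Connected) (B : Set V) (n : ℕ) (x : V)
    (hx : x ∈ (psdStep G)^[n] B) : ∃ y ∈ B, G.dist y x ≤ n := by
  induction n generalizing B with
  | zero => exact ⟨x, hx, by simp [SimpleGraph.dist_self]⟩
  | succ m ih =>
    rw [Function.iterate_succ_apply] at hx
    obtain ⟨y, hy, hd⟩ := ih (psdStep G B) hx
    rcases hy with hy | ⟨v, hv⟩
    · exact ⟨y, hy, by omega⟩
    · refine ⟨v, hv.1, ?_⟩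
      have h1 : G.dist v y ≤ 1 := SimpleGraph.dist_le hv.2.2.1.toWalk
      have := hc.dist_triangle (u := v) (v := y) (w := x)
      omega

end Forcing

theorem stmt_13 {V : Type*} [Fintype V] (T : SimpleGraph V) (hT : T.IsTree)
    (d : ℕ) (hd : d = T.diam) :
    (⌈Real.sqrt (2 * ((d : ℝ) + 1)) - 1 / 2⌉ : ℤ) ≤ (psdTh T : ℤ) ∧
    psdTh T ≤ (d + 1) / 2 + 1 := by
  classical
  have hconn : T.Connected := hT.isConnected
  have hne : Nonempty V := hconn.nonempty
  -- diameter facts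
  have hediam : T.ediam ≠ ⊤ := by
    obtain ⟨u, v, huv⟩ := SimpleGraph.exists_edist_eq_ediam_of_finite (G := T)
    rw [← huv]
    exact SimpleGraph.edist_ne_top_iff_reachable.mpr (hconn u v)
  obtain ⟨u, v, huv⟩ := SimpleGraph.exists_dist_eq_diam (G := T)
  rw [← hd] at huv
  have hdist_le : ∀ x y : V, T.dist x y ≤ d := by
    intro x y
    rw [hd]
    exact SimpleGraph.dist_le_diam hediam
  constructor
  · -- lower bound
    have hth_ne : {k | ∃ S : Finset V, IsPSDForcingSet T ↑S ∧ k = S.card + psdPt T ↑S}.Nonempty := by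
      refine ⟨Finset.univ.card + psdPt T ↑(Finset.univ : Finset V), Finset.univ, ⟨0, ?_⟩, rfl⟩
      simp
    obtain ⟨S, hS, hk⟩ := Nat.sInf_mem hth_ne
    set k := psdTh T with hkdef
    have hpt_ne : {t | (psdStep T)^[t] (↑S : Set V) = Set.univ}.Nonempty := hS
    have ht : (psdStep T)^[psdPt T ↑S] (↑S : Set V) = Set.univ := Nat.sInf_mem hpt_ne
    set s := S.card with hs
    set t := psdPt T (↑S : Set V) with htdef
    -- geodesic points
    have hgeo : ∀ i : ℕ, i ≤ d → ∃ c, T.dist u c = i ∧ T.dist c v = d - i := by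
      intro i hi
      have := exists_intermediate hconn u v i (by omega)
      rwa [huv] at this
    have hpf : ∀ i : ℕ, ∃ c, i ≤ d → (T.dist u c = i ∧ T.dist c v = d - i) := by
      intro i
      by_cases hi : i ≤ d
      · obtain ⟨c, hc⟩ := hgeo i hi
        exact ⟨c, fun _ => hc⟩
      · exact ⟨u, fun h => absurd h hi⟩
    choose p hp using hpf
    -- nearest blue vertex
    have hnear : ∀ x : V, ∃ y, y ∈ (↑S : Set V) ∧ T.dist y x ≤ t := by
      intro x
      have : x ∈ (psdStep T)^[t] (↑S : Set V) := by rw [ht]; trivial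
      obtain ⟨y, hy, hyd⟩ := spread hconn _ _ _ this
      exact ⟨y, hy, hyd⟩
    choose g hg1 hg2 using hnear
    -- counting
    have hkey : ∀ i j : ℕ, i ≤ d → j ≤ d → i ≤ j → g (p i) = g (p j) → j - i ≤ 2 * t := by
      intro i j hi hj hij hgij
      obtain ⟨hpi1, hpi2⟩ := hp i hi
      obtain ⟨hpj1, hpj2⟩ := hp j hj
      have h1 : T.dist (p i) (p j) ≤ T.dist (p i) (g (p i)) + T.dist (g (p i)) (p j) :=
        hconn.dist_triangle
      have h2 : T.dist (p i) (g (p i)) = T.dist (g (p i)) (p i) := SimpleGraph.dist_comm ..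
      have h3 : T.dist (g (p i)) (p i) ≤ t := hg2 _
      have h7 : T.dist (g (p i)) (p j) ≤ t := by rw [hgij]; exact hg2 _
      have h5 : T.dist u v ≤ T.dist u (p i) + T.dist (p i) v := hconn.dist_triangle
      have h6 : T.dist (p i) v ≤ T.dist (p i) (p j) + T.dist (p j) v := hconn.dist_triangle
      rw [huv] at h5
      omega
    have hcount : d + 1 ≤ s * (2 * t + 1) := by
      have hmap : ∀ i ∈ Finset.range (d + 1), g (p i) ∈ S := by
        intro i _
        have := hg1 (p i)
        simpa using this
      have hcard := Finset.card_eq_sum_card_fiberwise hmap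
      have hfib : ∀ y ∈ S, ((Finset.range (d+1)).filter (fun i => g (p i) = y)).card ≤ 2 * t + 1 := by
        intro y _
        set F := (Finset.range (d+1)).filter (fun i => g (p i) = y) with hF
        by_cases hFne : F.Nonempty
        · have hmin := F.min'_mem hFne
          set a := F.min' hFne with ha
          have hsub : F ⊆ Finset.Icc a (a + 2 * t) := by
            intro i hiF
            rw [Finset.mem_Icc]
            refine ⟨F.min'_le i hiF, ?_⟩
            have hiR : i ∈ Finset.range (d+1) := Finset.mem_of_mem_filter _ hiF
            have haR : a ∈ Finset.range (d+1) := Finset.mem_of_mem_filter _ hmin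
            rw [Finset.mem_range] at hiR haR
            have hgi : g (p i) = y := (Finset.mem_filter.mp hiF).2
            have hga : g (p a) = y := (Finset.mem_filter.mp hmin).2
            have := hkey a i (by omega) (by omega) (F.min'_le i hiF) (hga.trans hgi.symm)
            omega
          calc F.card ≤ (Finset.Icc a (a + 2*t)).card := Finset.card_le_card hsub
            _ = 2 * t + 1 := by rw [Nat.card_Icc]; omega
        · rw [Finset.not_nonempty_iff_eq_empty] at hFne
          simp [hFne]
      calc d + 1 = (Finset.range (d+1)).card := by rw [Finset.card_range]
        _ = ∑ y ∈ S, ((Finset.range (d+1)).filter (fun i => g (p i) = y)).card := hcard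
        _ ≤ ∑ _y ∈ S, (2 * t + 1) := Finset.sum_le_sum hfib
        _ = s * (2 * t + 1) := by rw [Finset.sum_const, smul_eq_mul]
    -- arithmetic
    rw [Int.ceil_le]
    push_cast
    rw [sub_le_iff_le_add]
    have hsq : 2 * ((d : ℝ) + 1) ≤ ((k : ℝ) + 1/2)^2 := by
      have hk2 : k = s + t := hk
      have hkst : (k : ℝ) = (s : ℝ) + (t : ℝ) := by
        rw [hk2]; push_cast; ring
      have hcr : (d : ℝ) + 1 ≤ (s : ℝ) * (2 * t + 1) := by
        have := hcount; push_cast at this ⊢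
        calc (d : ℝ) + 1 = ((d + 1 : ℕ) : ℝ) := by push_cast; ring
          _ ≤ ((s * (2 * t + 1) : ℕ) : ℝ) := by exact_mod_cast hcount
          _ = (s : ℝ) * (2 * t + 1) := by push_cast; ring
      rw [hkst]
      nlinarith [sq_nonneg ((s:ℝ) - t - 1/2)]
    have hsqrt : Real.sqrt (2 * ((d : ℝ) + 1)) ≤ (k : ℝ) + 1/2 := by
      have h0 : (0:ℝ) ≤ (k : ℝ) + 1/2 := by positivity
      calc Real.sqrt (2 * ((d : ℝ) + 1)) ≤ Real.sqrt (((k : ℝ) + 1/2)^2) :=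
            Real.sqrt_le_sqrt hsq
        _ = (k : ℝ) + 1/2 := Real.sqrt_sq h0
    linarith
  · -- upper bound
    set h0 := (d + 1) / 2 with hh0
    have hh0d : h0 ≤ d := by omega
    obtain ⟨c, hc1, hc2⟩ := by
      have := exists_intermediate hconn u v h0 (by rw [huv]; omega)
      rwa [huv] at this
    have hsum : T.dist u c + T.dist c v = T.dist u v := by rw [huv]; omega
    have hecc : ∀ x, T.dist c x ≤ h0 := by
      intro x
      have hcu : T.dist c u = h0 := by rw [SimpleGraph.dist_comm]; exact hc1
      rcases tree_center_split hT hsum x with hx | hx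
      · have := hdist_le x u
        have hxc : T.dist x c = T.dist c x := SimpleGraph.dist_comm ..
        omega
      · have := hdist_le x v
        have hxc : T.dist x c = T.dist c x := SimpleGraph.dist_comm ..
        omega
    have hball : (psdStep T)^[h0] ({c} : Set V) = Set.univ := by
      rw [tree_ball hT]
      ext x
      simp [hecc x]
    have hcoe : ((({c} : Finset V)) : Set V) = ({c} : Set V) := by simp
    have hforce : IsPSDForcingSet T ↑({c} : Finset V) := ⟨h0, by rw [hcoe]; exact hball⟩
    have hpt : psdPt T ↑({c} : Finset V) ≤ h0 := by
      apply Nat.sInf_le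
      rw [Set.mem_setOf_eq, hcoe]
      exact hball
    have hth : psdTh T ≤ ({c} : Finset V).card + psdPt T ↑({c} : Finset V) :=
      Nat.sInf_le ⟨{c}, hforce, rfl⟩
    rw [Finset.card_singleton] at hth
    omega
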